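/- Let G be a countable group with sofic approximation Σ = (σ_n : G → Sym(V_n)), (𝒳,d) a compact metric space, μ a shift-invariant Borel probability measure on 𝒳^G, and suppose θ ∈ Pr(Pr(𝒳^G)) is a subsequential weak* limit of the distributions P^{σ_n}_* μ_n, where μ_n ∈ Pr(𝒳^{V_n}) and the local weak* convergence μ_n → μ holds (i.e. for every weak* neighbourhood O of μ, the proportion of v ∈ V_n with (Π^{σ_n}_v)_* μ_n ∈ O tends to 1). Then θ is supported on the set of shift-invariant measures on 𝒳^G, and its barycentre equals μ: ∫ ν dθ(ν) = μ. -/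

import Mathlib

open MeasureTheory Filter Topology
open scoped ENNReal NNReal

/-- The right-shift action: `(S^g y) h = y (h * g)`. -/
def shiftMap (G : Type*) [Group G] (𝒳 : Type*) (g : G) : (G → 𝒳) → (G → 𝒳) :=
  fun y h => y (h * g)

/-- The pullback name of `x : 𝒳^V` at `v` over `σ`. -/
def pullbackName {G W 𝒳 : Type*} (σ : G → Equiv.Perm W) (v : W) (x : W → 𝒳) : G → 𝒳 :=
  fun g => x (σ g v)

lemma measurable_pullbackName {G W 𝒳 : Type*} [MeasurableSpace 𝒳]
    (σ : G → Equiv.Perm W) (v : W) : Measurable (pullbackName (𝒳 := 𝒳) σ v) :=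
  measurable_pi_lambda _ fun _ => measurable_pi_apply _

/-- The pushforward `(Π^σ_v)_* θ` of a probability measure on `𝒳^W` to `𝒳^G`. -/
noncomputable def pushName {G W 𝒳 : Type*} [MeasurableSpace 𝒳]
    (σ : G → Equiv.Perm W) (v : W) (θ : ProbabilityMeasure (W → 𝒳)) :
    ProbabilityMeasure (G → 𝒳) :=
  θ.map (measurable_pullbackName σ v).aemeasurable

/-- The empirical distribution `P^σ_x = (1/|W|) Σ_v δ_{Π^σ_v(x)}` as a probability
measure on `𝒳^G`. -/
noncomputable def empProb {G W 𝒳 : Type*} [Fintype W] [Nonempty W] [MeasurableSpace 𝒳]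
    (σ : G → Equiv.Perm W) (x : W → 𝒳) : ProbabilityMeasure (G → 𝒳) :=
  ⟨(Fintype.card W : ℝ≥0∞)⁻¹ • ∑ v : W, Measure.dirac (pullbackName σ v x), by
    constructor
    simp only [Measure.smul_apply, Measure.finset_sum_apply, measure_univ,
      Finset.sum_const, Finset.card_univ, nsmul_eq_mul, mul_one, smul_eq_mul]
    exact ENNReal.inv_mul_cancel (by simp [Fintype.card_ne_zero]) (by simp)⟩


section Helpers
open BoundedContinuousFunction Uniformity Metric
set_option linter.unusedSectionVars false
set_option linter.unusedVariables false
set_option maxHeartbeats 1000000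

/-- Averaging estimate. -/
lemma avg_bound {W : Type*} [Fintype W] [Nonempty W] (u : W → ℝ) (a ε c : ℝ)
    (hε : 0 ≤ ε) (p : W → Prop) [DecidablePred p]
    (hgood : ∀ v, p v → |u v - a| ≤ ε) (hall : ∀ v, |u v - a| ≤ c) :
    |(Fintype.card W : ℝ)⁻¹ * ∑ v, u v - a|
      ≤ ε + c * (((Finset.univ.filter fun v => ¬ p v).card : ℝ) / (Fintype.card W)) := by
  have hN : (0:ℝ) < (Fintype.card W : ℝ) := by
    exact_mod_cast Fintype.card_pos
  have hc : 0 ≤ c := le_trans (abs_nonneg _) (hall (Classical.arbitrary W))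
  have key : |∑ v, (u v - a)| ≤ (Fintype.card W : ℝ) * ε
      + ((Finset.univ.filter fun v => ¬ p v).card : ℝ) * c := by
    calc |∑ v, (u v - a)| ≤ ∑ v, |u v - a| := Finset.abs_sum_le_sum_abs _ _
    _ = (∑ v ∈ Finset.univ.filter p, |u v - a|)
        + ∑ v ∈ Finset.univ.filter fun v => ¬ p v, |u v - a| :=
      (Finset.sum_filter_add_sum_filter_not _ _ _).symm
    _ ≤ (Finset.univ.filter p).card * ε
        + ((Finset.univ.filter fun v => ¬ p v).card : ℝ) * c := by
      gcongr ?_ + ?_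
      · calc _ ≤ (Finset.univ.filter p).card • ε :=
            Finset.sum_le_card_nsmul _ _ _ (fun v hv => hgood v (by simpa using hv))
        _ = _ := by simp [nsmul_eq_mul]
      · calc _ ≤ ((Finset.univ.filter fun v => ¬ p v).card) • c :=
            Finset.sum_le_card_nsmul _ _ _ (fun v _ => hall v)
        _ = _ := by simp [nsmul_eq_mul]
    _ ≤ _ := by
      gcongr
      exact_mod_cast Finset.card_le_card (Finset.subset_univ _) |>.trans_eq
        (by simp)
  have hsum : (Fintype.card W : ℝ)⁻¹ * ∑ v, u v - a
      = (Fintype.card W : ℝ)⁻¹ * ∑ v, (u v - a) := by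
    rw [Finset.sum_sub_distrib]
    simp only [Finset.sum_const, Finset.card_univ, nsmul_eq_mul, mul_sub]
    rw [← mul_assoc, inv_mul_cancel₀ hN.ne', one_mul]
  rw [hsum, abs_mul, abs_inv, abs_of_pos hN]
  rw [div_eq_mul_inv]
  calc (Fintype.card W : ℝ)⁻¹ * |∑ v, (u v - a)|
      ≤ (Fintype.card W : ℝ)⁻¹ * ((Fintype.card W : ℝ) * ε
        + ((Finset.univ.filter fun v => ¬ p v).card : ℝ) * c) := by
        gcongr
  _ = ε + c * (((Finset.univ.filter fun v => ¬ p v).card : ℝ) * (Fintype.card W : ℝ)⁻¹) := by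
      field_simp


/-- From density →1 of a predicate, the fraction of failures tends to 0. -/
lemma frac_neg_tendsto {V : ℕ → Type*} [∀ n, Fintype (V n)] [∀ n, Nonempty (V n)]
    (P : ∀ n, V n → Prop) [∀ n, DecidablePred (P n)]
    (h : Tendsto (fun n => (Nat.card {v : V n // P n v} : ℝ) / (Nat.card (V n))) atTop (𝓝 1)) :
    Tendsto (fun n => ((Finset.univ.filter fun v => ¬ P n v).card : ℝ) / (Fintype.card (V n)))
      atTop (𝓝 0) := by
  have key : ∀ n, ((Finset.univ.filter fun v => ¬ P n v).card : ℝ) / (Fintype.card (V n))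
      = 1 - (Nat.card {v : V n // P n v} : ℝ) / (Nat.card (V n)) := by
    intro n
    have hN : (0:ℝ) < (Fintype.card (V n) : ℝ) := by exact_mod_cast Fintype.card_pos
    have hadd := Finset.card_filter_add_card_filter_not (s := (Finset.univ : Finset (V n)))
      (p := P n)
    rw [Nat.card_eq_fintype_card, Nat.card_eq_fintype_card, Fintype.card_subtype]
    have : ((Finset.univ.filter (P n)).card : ℝ)
        + ((Finset.univ.filter fun v => ¬ P n v).card : ℝ) = (Fintype.card (V n) : ℝ) := by
      exact_mod_cast (by simpa using hadd)
    field_simp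
    linarith
  simp only [key]
  have := h.const_sub 1
  simpa using this

/-- Uniform continuity on a compact product gives a finite determining window. -/
lemma exists_finset_approx {G 𝒳 : Type*} [MetricSpace 𝒳] [CompactSpace 𝒳]
    (f : (G → 𝒳) →ᵇ ℝ) {ε : ℝ} (hε : 0 < ε) :
    ∃ I : Finset G, ∀ y z : G → 𝒳, (∀ h ∈ I, y h = z h) → |f y - f z| ≤ ε := by
  have huc : UniformContinuous f := CompactSpace.uniformContinuous_of_continuous f.continuous
  have hmem : {p : ℝ × ℝ | dist p.1 p.2 < ε} ∈ uniformity ℝ := dist_mem_uniformity hε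
  have hU : (fun p : (G → 𝒳) × (G → 𝒳) => (f p.1, f p.2)) ⁻¹'
      {p : ℝ × ℝ | dist p.1 p.2 < ε} ∈ 𝓤 (G → 𝒳) := huc hmem
  rw [Pi.uniformity, Filter.mem_iInf] at hU
  obtain ⟨I, hIfin, V, hV, hUeq⟩ := hU
  refine ⟨hIfin.toFinset, fun y z hyz => ?_⟩
  have hmemU : (y, z) ∈ (fun p : (G → 𝒳) × (G → 𝒳) => (f p.1, f p.2)) ⁻¹'
      {p : ℝ × ℝ | dist p.1 p.2 < ε} := by
    rw [hUeq]
    refine Set.mem_iInter.2 fun i => ?_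
    have := hV i
    rw [Filter.mem_comap] at this
    obtain ⟨W, hW, hWsub⟩ := this
    apply hWsub
    have : y (i : G) = z (i : G) := hyz i (hIfin.mem_toFinset.2 i.2)
    simp only [Set.mem_preimage, this]
    exact refl_mem_uniformity hW
  have : dist (f y) (f z) < ε := hmemU
  rw [Real.dist_eq] at this
  exact this.le

variable {G 𝒳 : Type*} [Group G] [Countable G]
  [MetricSpace 𝒳] [CompactSpace 𝒳] [SecondCountableTopology 𝒳]
  [MeasurableSpace 𝒳] [BorelSpace 𝒳]

lemma continuous_shiftMap (g : G) : Continuous (shiftMap G 𝒳 g) :=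
  continuous_pi fun h => continuous_apply (h * g)

lemma continuous_pullbackName {W : Type*} (σ : G → Equiv.Perm W) (v : W) :
    Continuous (pullbackName (𝒳 := 𝒳) σ v) :=
  continuous_pi fun g => continuous_apply _

/-- integral against the empirical measure. -/
lemma integral_empProb {W : Type*} [Fintype W] [Nonempty W] (σ : G → Equiv.Perm W)
    (x : W → 𝒳) (f : (G → 𝒳) →ᵇ ℝ) :
    ∫ y, f y ∂(empProb σ x : Measure (G → 𝒳))
      = (Fintype.card W : ℝ)⁻¹ * ∑ v : W, f (pullbackName σ v x) := by
  show ∫ y, f y ∂((Fintype.card W : ℝ≥0∞)⁻¹ • ∑ v : W, Measure.dirac (pullbackName σ v x)) = _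
  rw [integral_smul_measure, integral_finset_sum_measure (fun v _ => f.integrable _)]
  simp only [integral_dirac' _ _ f.continuous.stronglyMeasurable]
  rw [ENNReal.toReal_inv]
  simp [smul_eq_mul]


/-- Uniform almost-invariance of empirical averages under the shift, from soficity. -/
lemma uniform_shift_bound {V : ℕ → Type*} [∀ n, Fintype (V n)] [∀ n, Nonempty (V n)]
    (σ : ∀ n, G → Equiv.Perm (V n))
    (hσ1 : ∀ g h : G,
      Tendsto (fun n => (Nat.card {v : V n // σ n g (σ n h v) = σ n (g * h) v} : ℝ)
          / (Nat.card (V n))) atTop (𝓝 1))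
    (f : (G → 𝒳) →ᵇ ℝ) (g : G) {ε : ℝ} (hε : 0 < ε) :
    ∀ᶠ n in atTop, ∀ x : V n → 𝒳,
      |(Fintype.card (V n) : ℝ)⁻¹ * ∑ v, f (shiftMap G 𝒳 g (pullbackName (σ n) v x))
        - (Fintype.card (V n) : ℝ)⁻¹ * ∑ v, f (pullbackName (σ n) v x)| ≤ ε := by
  classical
  obtain ⟨I, hI⟩ := exists_finset_approx f (half_pos hε)
  set P : ∀ n, V n → Prop := fun n v => ∀ h ∈ I, σ n h (σ n g v) = σ n (h * g) v with hP
  set bad : ∀ n, ℝ := fun n =>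
    ((Finset.univ.filter fun v => ¬ P n v).card : ℝ) / (Fintype.card (V n)) with hbad
  -- the bad fraction tends to 0
  have hbad0 : Tendsto bad atTop (𝓝 0) := by
    have hle : ∀ n, bad n ≤ ∑ h ∈ I,
        ((Finset.univ.filter fun v => ¬ σ n h (σ n g v) = σ n (h * g) v).card : ℝ)
          / (Fintype.card (V n)) := by
      intro n
      have hsub : (Finset.univ.filter fun v => ¬ P n v)
          ⊆ I.biUnion (fun h => Finset.univ.filter fun v => ¬ σ n h (σ n g v) = σ n (h * g) v) := by
        intro v hv
        simp only [Finset.mem_filter, hP, not_forall] at hv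
        obtain ⟨h, hhI, hne⟩ := hv.2
        exact Finset.mem_biUnion.2 ⟨h, hhI, by simp [hne]⟩
      have hcard : ((Finset.univ.filter fun v => ¬ P n v).card : ℝ)
          ≤ ∑ h ∈ I, ((Finset.univ.filter fun v =>
              ¬ σ n h (σ n g v) = σ n (h * g) v).card : ℝ) := by
        calc ((Finset.univ.filter fun v => ¬ P n v).card : ℝ)
            ≤ ((I.biUnion fun h => Finset.univ.filter fun v =>
                ¬ σ n h (σ n g v) = σ n (h * g) v).card : ℝ) := by
              exact_mod_cast Finset.card_le_card hsub
        _ ≤ _ := by exact_mod_cast Finset.card_biUnion_le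
      rw [hbad, ← Finset.sum_div]
      apply div_le_div_of_nonneg_right hcard
      positivity
    have hsum0 : Tendsto (fun n => ∑ h ∈ I,
        ((Finset.univ.filter fun v => ¬ σ n h (σ n g v) = σ n (h * g) v).card : ℝ)
          / (Fintype.card (V n))) atTop (𝓝 0) := by
      have : ∀ h ∈ I, Tendsto (fun n =>
          ((Finset.univ.filter fun v => ¬ σ n h (σ n g v) = σ n (h * g) v).card : ℝ)
            / (Fintype.card (V n))) atTop (𝓝 0) := by
        intro h _
        exact frac_neg_tendsto (fun n v => σ n h (σ n g v) = σ n (h * g) v) (hσ1 h g)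
      simpa using tendsto_finset_sum I this
    have hnn : ∀ n, 0 ≤ bad n := fun n => by positivity
    exact squeeze_zero hnn hle hsum0
  -- pick n with small bad fraction
  have hev : ∀ᶠ n in atTop, (2 * ‖f‖) * bad n < ε / 2 := by
    have : Tendsto (fun n => (2 * ‖f‖) * bad n) atTop (𝓝 ((2 * ‖f‖) * 0)) :=
      hbad0.const_mul _
    rw [mul_zero] at this
    exact this.eventually (gt_mem_nhds (half_pos hε))
  filter_upwards [hev] with n hn x
  -- reindex the second sum by the permutation σ n g
  have hre : ∑ v, f (pullbackName (σ n) v x)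
      = ∑ v, f (pullbackName (σ n) (σ n g v) x) :=
    (Equiv.sum_comp (σ n g) (fun v => f (pullbackName (σ n) v x))).symm
  rw [hre]
  have hdiff : (Fintype.card (V n) : ℝ)⁻¹ * ∑ v, f (shiftMap G 𝒳 g (pullbackName (σ n) v x))
      - (Fintype.card (V n) : ℝ)⁻¹ * ∑ v, f (pullbackName (σ n) (σ n g v) x)
      = (Fintype.card (V n) : ℝ)⁻¹ * ∑ v, (f (shiftMap G 𝒳 g (pullbackName (σ n) v x))
          - f (pullbackName (σ n) (σ n g v) x)) := by
    rw [Finset.sum_sub_distrib, mul_sub]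
  rw [hdiff]
  have key := avg_bound (fun v => f (shiftMap G 𝒳 g (pullbackName (σ n) v x))
      - f (pullbackName (σ n) (σ n g v) x)) 0 (ε/2) (2 * ‖f‖) (half_pos hε).le (P n)
    (fun v hv => by
      simp only [sub_zero]
      apply hI
      intro h hh
      show pullbackName (σ n) v x (h * g) = x (σ n h (σ n g v))
      show x (σ n (h * g) v) = x (σ n h (σ n g v))
      rw [hv h hh])
    (fun v => by
      simp only [sub_zero]
      calc |f (shiftMap G 𝒳 g (pullbackName (σ n) v x))
          - f (pullbackName (σ n) (σ n g v) x)|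
          ≤ |f (shiftMap G 𝒳 g (pullbackName (σ n) v x))|
            + |f (pullbackName (σ n) (σ n g v) x)| := abs_sub _ _
      _ ≤ ‖f‖ + ‖f‖ := add_le_add (f.norm_coe_le_norm _) (f.norm_coe_le_norm _)
      _ = 2 * ‖f‖ := by ring)
  rw [sub_zero] at key
  calc _ ≤ ε/2 + (2 * ‖f‖) * bad n := key
  _ ≤ ε/2 + ε/2 := by linarith
  _ = ε := add_halves ε


end Helpers

section intBCF2
open BoundedContinuousFunction
set_option linter.unusedSectionVars false
section intBCF
variable {α : Type*} [TopologicalSpace α] [MeasurableSpace α] [OpensMeasurableSpace α]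

noncomputable def intBCF (f : α →ᵇ ℝ) : ProbabilityMeasure α →ᵇ ℝ :=
  BoundedContinuousFunction.ofNormedAddCommGroup
    (fun ν => ∫ x, f x ∂(ν : Measure α))
    (ProbabilityMeasure.continuous_integral_boundedContinuousFunction f)
    ‖f‖
    (fun ν => by
      calc ‖∫ x, f x ∂(ν : Measure α)‖
          ≤ ‖f‖ * ((ν : Measure α) Set.univ).toReal :=
            norm_integral_le_of_norm_le_const
              (Filter.Eventually.of_forall fun x => f.norm_coe_le_norm x)
      _ = ‖f‖ := by simp)

@[simp] lemma intBCF_apply (f : α →ᵇ ℝ) (ν : ProbabilityMeasure α) :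
    intBCF f ν = ∫ x, f x ∂(ν : Measure α) := rfl

lemma abs_integral_le_norm (f : α →ᵇ ℝ) (ν : Measure α) [IsProbabilityMeasure ν] :
    |∫ x, f x ∂ν| ≤ ‖f‖ := by
  calc |∫ x, f x ∂ν| = ‖∫ x, f x ∂ν‖ := rfl
  _ ≤ ‖f‖ * (ν Set.univ).toReal := norm_integral_le_of_norm_le_const
      (Filter.Eventually.of_forall fun x => f.norm_coe_le_norm x)
  _ = ‖f‖ := by simp

end intBCF

section convCM
variable {X : Type*} [TopologicalSpace X] [CompactSpace X] [MeasurableSpace X]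
  [OpensMeasurableSpace X]

/-- Convergence in `C(X, ℝ)` (compact `X`) implies convergence of integrals against a
probability measure. -/
lemma integral_tendsto_of_tendsto_CM (ν : Measure X) [IsProbabilityMeasure ν]
    {u : ℕ → C(X, ℝ)} {fc : C(X, ℝ)} (h : Tendsto u atTop (𝓝 fc)) :
    Tendsto (fun k => ∫ x, u k x ∂ν) atTop (𝓝 (∫ x, fc x ∂ν)) := by
  have hdist : Tendsto (fun k => dist (u k) fc) atTop (𝓝 0) :=
    tendsto_iff_dist_tendsto_zero.mp h
  rw [tendsto_iff_norm_sub_tendsto_zero]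
  apply squeeze_zero (fun k => norm_nonneg _) ?_ hdist
  intro k
  have hint1 : Integrable (fun x => u k x) ν := (mkOfCompact (u k)).integrable ν
  have hint2 : Integrable (fun x => fc x) ν := (mkOfCompact fc).integrable ν
  rw [← integral_sub hint1 hint2]
  calc ‖∫ x, (u k x - fc x) ∂ν‖
      ≤ dist (u k) fc * (ν Set.univ).toReal :=
        norm_integral_le_of_norm_le_const (Filter.Eventually.of_forall fun x => by
          rw [Real.norm_eq_abs, ← Real.dist_eq]
          exact ContinuousMap.dist_apply_le_dist x)
  _ = dist (u k) fc := by simp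

end convCM

end intBCF2

set_option maxHeartbeats 1000000 in
open BoundedContinuousFunction in
/-- **Limits of distributions invariant measures and
have barycentre `μ`.**  If `μ_n` locally weak* converges to a shift-invariant `μ`
and `θ` is a subsequential weak* limit of the distributions `P^{σ_n}_* μ_n`, then
`θ` is supported on shift-invariant measures and `∫ ν dθ(ν) = μ`. -/
theorem limit_of_empirical_distributions_invariant_barycentre
    {G 𝒳 : Type*} [Group G] [Countable G]
    [MetricSpace 𝒳] [CompactSpace 𝒳] [SecondCountableTopology 𝒳]
    [MeasurableSpace 𝒳] [BorelSpace 𝒳]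
    [MeasurableSpace (ProbabilityMeasure (G → 𝒳))]
    [OpensMeasurableSpace (ProbabilityMeasure (G → 𝒳))]
    (V : ℕ → Type*) [∀ n, Fintype (V n)] [∀ n, Nonempty (V n)]
    (σ : ∀ n, G → Equiv.Perm (V n))
    (hσ1 : ∀ g h : G,
      Tendsto (fun n => (Nat.card {v : V n // σ n g (σ n h v) = σ n (g * h) v} : ℝ)
          / (Nat.card (V n))) atTop (𝓝 1))
    (hσ2 : ∀ g : G, g ≠ 1 →
      Tendsto (fun n => (Nat.card {v : V n // σ n g v ≠ v} : ℝ)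
          / (Nat.card (V n))) atTop (𝓝 1))
    (μ : ProbabilityMeasure (G → 𝒳))
    (hinv : ∀ g : G,
      Measure.map (shiftMap G 𝒳 g) (μ : Measure (G → 𝒳)) = (μ : Measure (G → 𝒳)))
    (μn : ∀ n, ProbabilityMeasure (V n → 𝒳))
    (hlw : ∀ O ∈ 𝓝 μ,
      Tendsto (fun n => (Nat.card {v : V n // pushName (σ n) v (μn n) ∈ O} : ℝ)
          / (Nat.card (V n))) atTop (𝓝 1))
    (Q : ∀ n, ProbabilityMeasure (ProbabilityMeasure (G → 𝒳)))
    (hQ : ∀ n, (Q n : Measure (ProbabilityMeasure (G → 𝒳)))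
        = Measure.map (fun x => empProb (σ n) x) (μn n : Measure (V n → 𝒳)))
    (θ : ProbabilityMeasure (ProbabilityMeasure (G → 𝒳)))
    (nseq : ℕ → ℕ) (hmono : StrictMono nseq)
    (hlim : Tendsto (fun i => Q (nseq i)) atTop (𝓝 θ)) :
    (θ : Measure (ProbabilityMeasure (G → 𝒳)))
        {ν : ProbabilityMeasure (G → 𝒳) | ∀ g : G,
          Measure.map (shiftMap G 𝒳 g) (ν : Measure (G → 𝒳)) = (ν : Measure (G → 𝒳))} = 1
      ∧ ∀ f : (G → 𝒳) → ℝ, Continuous f →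
          (∫ ν, (∫ x, f x ∂(ν : Measure (G → 𝒳)))
              ∂(θ : Measure (ProbabilityMeasure (G → 𝒳))))
            = ∫ x, f x ∂(μ : Measure (G → 𝒳)) := by
  classical
  -- the empirical-distribution maps are a.e. measurable
  have hQae : ∀ n, AEMeasurable (fun x => empProb (σ n) x) (μn n : Measure (V n → 𝒳)) := by
    intro n
    by_contra hc
    have h0 : Measure.map (fun x => empProb (σ n) x) (μn n : Measure (V n → 𝒳)) = 0 :=
      Measure.map_of_not_aemeasurable hc
    have h1 := hQ n
    rw [h0] at h1
    have h2 := congrArg (fun m : Measure (ProbabilityMeasure (G → 𝒳)) => m Set.univ) h1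
    simp at h2
  -- integrals against `Q n`
  have hQint : ∀ (n : ℕ) (F : ProbabilityMeasure (G → 𝒳) →ᵇ ℝ),
      ∫ ν, F ν ∂(Q n : Measure (ProbabilityMeasure (G → 𝒳)))
        = ∫ x, F (empProb (σ n) x) ∂(μn n : Measure (V n → 𝒳)) := by
    intro n F
    rw [hQ n, integral_map (hQae n) F.continuous.aestronglyMeasurable]
  -- limits of integrals along the subsequence
  have hlimF : ∀ F : ProbabilityMeasure (G → 𝒳) →ᵇ ℝ,
      Tendsto (fun i => ∫ x, F (empProb (σ (nseq i)) x) ∂(μn (nseq i) : Measure (V (nseq i) → 𝒳)))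
        atTop (𝓝 (∫ ν, F ν ∂(θ : Measure (ProbabilityMeasure (G → 𝒳))))) := by
    intro F
    have h := ProbabilityMeasure.tendsto_iff_forall_integral_tendsto.mp hlim F
    simpa only [hQint] using h
  -- ** Claim 2: barycentre **
  have key2 : ∀ f : (G → 𝒳) →ᵇ ℝ,
      (∫ ν, (∫ x, f x ∂(ν : Measure (G → 𝒳)))
          ∂(θ : Measure (ProbabilityMeasure (G → 𝒳))))
        = ∫ x, f x ∂(μ : Measure (G → 𝒳)) := by
    intro f
    have h1 := hlimF (intBCF f)
    have h2 : Tendsto (fun n => ∫ x, (intBCF f) (empProb (σ n) x)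
        ∂(μn n : Measure (V n → 𝒳))) atTop (𝓝 (∫ x, f x ∂(μ : Measure (G → 𝒳)))) := by
      rw [Metric.tendsto_nhds]
      intro ε hε
      set L := ∫ x, f x ∂(μ : Measure (G → 𝒳)) with hL
      set O : Set (ProbabilityMeasure (G → 𝒳)) :=
        (fun ν : ProbabilityMeasure (G → 𝒳) => ∫ x, f x ∂(ν : Measure (G → 𝒳))) ⁻¹'
          Metric.ball L (ε/4) with hO
      have hOmem : O ∈ 𝓝 μ := by
        apply IsOpen.mem_nhds
        · exact (ProbabilityMeasure.continuous_integral_boundedContinuousFunction f)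
            |>.isOpen_preimage _ Metric.isOpen_ball
        · simp only [hO, Set.mem_preimage, Metric.mem_ball, hL, dist_self]
          positivity
      have hfrac := frac_neg_tendsto (fun n v => pushName (σ n) v (μn n) ∈ O) (hlw O hOmem)
      have hev : ∀ᶠ n in atTop, (2 * ‖f‖) *
          (((Finset.univ.filter fun v =>
              ¬ pushName (σ n) v (μn n) ∈ O).card : ℝ) / (Fintype.card (V n))) < ε/4 := by
        have := hfrac.const_mul (2 * ‖f‖)
        rw [mul_zero] at this
        exact this.eventually (gt_mem_nhds (by positivity))
      filter_upwards [hev] with n hn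
      -- rewrite the integral as an average of integrals against pushforwards
      have hcomp : ∫ x, (intBCF f) (empProb (σ n) x) ∂(μn n : Measure (V n → 𝒳))
          = (Fintype.card (V n) : ℝ)⁻¹ * ∑ v : V n,
              ∫ y, f y ∂(pushName (σ n) v (μn n) : Measure (G → 𝒳)) := by
        simp only [intBCF_apply, integral_empProb]
        rw [integral_const_mul]
        congr 1
        rw [integral_finset_sum]
        · refine Finset.sum_congr rfl fun v _ => ?_
          have hcoe : (pushName (σ n) v (μn n) : Measure (G → 𝒳))
              = Measure.map (pullbackName (σ n) v) (μn n : Measure (V n → 𝒳)) :=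
            ProbabilityMeasure.toMeasure_map _ _
          rw [hcoe, integral_map (measurable_pullbackName (σ n) v).aemeasurable
            f.continuous.aestronglyMeasurable]
        · intro v _
          exact (f.compContinuous ⟨pullbackName (σ n) v, continuous_pullbackName (σ n) v⟩).integrable _
      rw [hcomp, Real.dist_eq]
      have key := avg_bound
        (fun v : V n => ∫ y, f y ∂(pushName (σ n) v (μn n) : Measure (G → 𝒳))) L
        (ε/4) (2 * ‖f‖) (by positivity)
        (fun v => pushName (σ n) v (μn n) ∈ O)
        (fun v hv => by
          have : dist (∫ y, f y ∂(pushName (σ n) v (μn n) : Measure (G → 𝒳))) L < ε/4 := hv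
          rw [Real.dist_eq] at this
          exact this.le)
        (fun v => by
          calc |(∫ y, f y ∂(pushName (σ n) v (μn n) : Measure (G → 𝒳))) - L|
              ≤ |∫ y, f y ∂(pushName (σ n) v (μn n) : Measure (G → 𝒳))| + |L| := abs_sub _ _
          _ ≤ ‖f‖ + ‖f‖ := add_le_add (abs_integral_le_norm f _) (abs_integral_le_norm f _)
          _ = 2 * ‖f‖ := by ring)
      calc _ ≤ ε/4 + (2 * ‖f‖) * (((Finset.univ.filter fun v =>
            ¬ pushName (σ n) v (μn n) ∈ O).card : ℝ) / (Fintype.card (V n))) := key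
      _ < ε/4 + ε/4 := by linarith
      _ < ε := by linarith
    exact tendsto_nhds_unique h1 (h2.comp hmono.tendsto_atTop)
  -- ** Claim 1: supported on invariant measures **
  -- shift maps as continuous maps
  let S : G → C((G → 𝒳), (G → 𝒳)) := fun g => ⟨shiftMap G 𝒳 g, continuous_shiftMap g⟩
  -- invariance follows from integral identities for all bounded continuous functions
  have inv_of_forall : ∀ (ν : ProbabilityMeasure (G → 𝒳)) (g : G),
      (∀ fb : (G → 𝒳) →ᵇ ℝ, ∫ x, fb (shiftMap G 𝒳 g x) ∂(ν : Measure (G → 𝒳))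
          = ∫ x, fb x ∂(ν : Measure (G → 𝒳))) →
      Measure.map (shiftMap G 𝒳 g) (ν : Measure (G → 𝒳)) = (ν : Measure (G → 𝒳)) := by
    intro ν g hall
    have hmble : Measurable (shiftMap G 𝒳 g) := (continuous_shiftMap g).measurable
    have : IsProbabilityMeasure (Measure.map (shiftMap G 𝒳 g) (ν : Measure (G → 𝒳))) :=
      Measure.isProbabilityMeasure_map hmble.aemeasurable
    apply ext_of_forall_lintegral_eq_of_IsFiniteMeasure
    intro f
    rw [lintegral_map (by exact f.continuous.measurable.coe_nnreal_ennreal) hmble]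
    have hint1 : Integrable (fun x => ((f (shiftMap G 𝒳 g x) : ℝ≥0) : ℝ))
        (ν : Measure (G → 𝒳)) :=
      (BoundedContinuousFunction.mkOfCompact
        ⟨fun x => ((f (shiftMap G 𝒳 g x) : ℝ≥0) : ℝ),
          NNReal.continuous_coe.comp (f.continuous.comp (continuous_shiftMap g))⟩).integrable _
    have hint2 : Integrable (fun x => ((f x : ℝ≥0) : ℝ)) (ν : Measure (G → 𝒳)) :=
      (BoundedContinuousFunction.mkOfCompact
        ⟨fun x => ((f x : ℝ≥0) : ℝ), NNReal.continuous_coe.comp f.continuous⟩).integrable _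
    rw [lintegral_coe_eq_integral _ hint1, lintegral_coe_eq_integral _ hint2]
    congr 1
    exact hall (BoundedContinuousFunction.mkOfCompact
      ⟨fun x => ((f x : ℝ≥0) : ℝ), NNReal.continuous_coe.comp f.continuous⟩)
  -- countable dense family of test functions
  obtain ⟨D, hDc, hDd⟩ := TopologicalSpace.exists_countable_dense C((G → 𝒳), ℝ)
  haveI : Countable D := hDc.to_subtype
  -- the basic closed sets
  let E : G → C((G → 𝒳), ℝ) → ℕ → Set (ProbabilityMeasure (G → 𝒳)) := fun g d k =>
    {ν : ProbabilityMeasure (G → 𝒳) |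
      |(∫ x, d (shiftMap G 𝒳 g x) ∂(ν : Measure (G → 𝒳)))
        - ∫ x, d x ∂(ν : Measure (G → 𝒳))| ≤ 1/((k : ℝ)+1)}
  have hcont1 : ∀ (g : G) (d : C((G → 𝒳), ℝ)),
      Continuous fun ν : ProbabilityMeasure (G → 𝒳) =>
        ∫ x, d (shiftMap G 𝒳 g x) ∂(ν : Measure (G → 𝒳)) := fun g d =>
    ProbabilityMeasure.continuous_integral_boundedContinuousFunction
      (BoundedContinuousFunction.mkOfCompact (d.comp (S g)))
  have hcont2 : ∀ d : C((G → 𝒳), ℝ),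
      Continuous fun ν : ProbabilityMeasure (G → 𝒳) =>
        ∫ x, d x ∂(ν : Measure (G → 𝒳)) := fun d =>
    ProbabilityMeasure.continuous_integral_boundedContinuousFunction
      (BoundedContinuousFunction.mkOfCompact d)
  have hEclosed : ∀ g d k, IsClosed (E g d k) := fun g d k =>
    isClosed_le (continuous_abs.comp ((hcont1 g d).sub (hcont2 d))) continuous_const
  -- each basic set has full measure under θ
  have hEone : ∀ (g : G) (d : C((G → 𝒳), ℝ)) (k : ℕ),
      (θ : Measure (ProbabilityMeasure (G → 𝒳))) (E g d k) = 1 := by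
    intro g d k
    have hclosed := hEclosed g d k
    have hpos : (0:ℝ) < 1/((k : ℝ)+1) := by positivity
    have hev : ∀ᶠ n in atTop,
        (Q n : Measure (ProbabilityMeasure (G → 𝒳))) (E g d k) = 1 := by
      filter_upwards [uniform_shift_bound σ hσ1
        (BoundedContinuousFunction.mkOfCompact d) g hpos] with n hn
      rw [hQ n, Measure.map_apply_of_aemeasurable (hQae n) hclosed.measurableSet]
      have hall : (fun x : V n → 𝒳 => empProb (σ n) x) ⁻¹' (E g d k) = Set.univ := by
        ext x
        simp only [Set.mem_preimage, Set.mem_univ, iff_true, E, Set.mem_setOf_eq]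
        have e1 : ∫ y, d (shiftMap G 𝒳 g y) ∂(empProb (σ n) x : Measure (G → 𝒳))
            = (Fintype.card (V n) : ℝ)⁻¹ * ∑ v : V n,
              d (shiftMap G 𝒳 g (pullbackName (σ n) v x)) :=
          integral_empProb (σ n) x (BoundedContinuousFunction.mkOfCompact (d.comp (S g)))
        have e2 : ∫ y, d y ∂(empProb (σ n) x : Measure (G → 𝒳))
            = (Fintype.card (V n) : ℝ)⁻¹ * ∑ v : V n, d (pullbackName (σ n) v x) :=
          integral_empProb (σ n) x (BoundedContinuousFunction.mkOfCompact d)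
        rw [e1, e2]
        exact hn x
      rw [hall, measure_univ]
    have hport := ProbabilityMeasure.limsup_measure_closed_le_of_tendsto hlim hclosed
    have hev' : ∀ᶠ i in atTop,
        (Q (nseq i) : Measure (ProbabilityMeasure (G → 𝒳))) (E g d k) = 1 :=
      hmono.tendsto_atTop.eventually hev
    have hls : limsup (fun i =>
        (Q (nseq i) : Measure (ProbabilityMeasure (G → 𝒳))) (E g d k)) atTop = 1 := by
      rw [limsup_congr hev', limsup_const]
    rw [hls] at hport
    exact le_antisymm prob_le_one hport
  -- intersect
  let A : Set (ProbabilityMeasure (G → 𝒳)) := ⋂ (g : G) (d : D) (k : ℕ), E g (d : C(_,ℝ)) k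
  have hAmble : MeasurableSet A :=
    MeasurableSet.iInter fun g => MeasurableSet.iInter fun d =>
      MeasurableSet.iInter fun k => (hEclosed g d k).measurableSet
  have hAone : (θ : Measure (ProbabilityMeasure (G → 𝒳))) A = 1 := by
    have hcompl : (θ : Measure (ProbabilityMeasure (G → 𝒳))) Aᶜ = 0 := by
      have hAc : Aᶜ = ⋃ (g : G) (d : D) (k : ℕ), (E g (d : C(_,ℝ)) k)ᶜ := by
        simp only [A, Set.compl_iInter]
      rw [hAc]
      refine measure_iUnion_null fun g => measure_iUnion_null fun d =>
        measure_iUnion_null fun k => ?_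
      rw [measure_compl (hEclosed g d k).measurableSet (by finiteness), hEone g d k]
      simp
    have h1 := prob_compl_eq_one_sub (μ := (θ : Measure (ProbabilityMeasure (G → 𝒳)))) hAmble
    rw [hcompl] at h1
    have h2 : (θ : Measure (ProbabilityMeasure (G → 𝒳))) A ≤ 1 := prob_le_one
    exact le_antisymm h2 (tsub_eq_zero_iff_le.mp h1.symm)
  -- A is contained in the set of invariant measures
  have hsub : A ⊆ {ν : ProbabilityMeasure (G → 𝒳) | ∀ g : G,
      Measure.map (shiftMap G 𝒳 g) (ν : Measure (G → 𝒳)) = (ν : Measure (G → 𝒳))} := by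
    intro ν hν g
    apply inv_of_forall ν g
    have hD : ∀ d ∈ D, ∫ x, d (shiftMap G 𝒳 g x) ∂(ν : Measure (G → 𝒳))
        = ∫ x, d x ∂(ν : Measure (G → 𝒳)) := by
      intro d hd
      have hk : ∀ k : ℕ, |(∫ x, d (shiftMap G 𝒳 g x) ∂(ν : Measure (G → 𝒳)))
          - ∫ x, d x ∂(ν : Measure (G → 𝒳))| ≤ 1/((k : ℝ)+1) := by
        intro k
        exact Set.mem_iInter.1 (Set.mem_iInter.1 (Set.mem_iInter.1 hν g) ⟨d, hd⟩) k
      by_contra hne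
      have habs : 0 < |(∫ x, d (shiftMap G 𝒳 g x) ∂(ν : Measure (G → 𝒳)))
          - ∫ x, d x ∂(ν : Measure (G → 𝒳))| := abs_pos.2 (sub_ne_zero.2 hne)
      obtain ⟨k, hk'⟩ := exists_nat_one_div_lt habs
      exact absurd (hk k) (not_le.2 hk')
    intro fb
    set fc : C((G → 𝒳), ℝ) := ⟨fb, fb.continuous⟩ with hfc
    obtain ⟨u, humem, hulim⟩ := mem_closure_iff_seq_limit.1 (hDd fc)
    have h1 : Tendsto (fun kk => ∫ x, u kk x ∂(ν : Measure (G → 𝒳))) atTop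
        (𝓝 (∫ x, fc x ∂(ν : Measure (G → 𝒳)))) :=
      integral_tendsto_of_tendsto_CM _ hulim
    have hcomp : Tendsto (fun kk => (u kk).comp (S g)) atTop (𝓝 (fc.comp (S g))) :=
      ((ContinuousMap.continuous_precomp (S g)).tendsto fc).comp hulim
    have h2 : Tendsto (fun kk => ∫ x, u kk (shiftMap G 𝒳 g x) ∂(ν : Measure (G → 𝒳))) atTop
        (𝓝 (∫ x, fc (shiftMap G 𝒳 g x) ∂(ν : Measure (G → 𝒳)))) :=
      integral_tendsto_of_tendsto_CM (u := fun kk => (u kk).comp (S g))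
        (fc := fc.comp (S g)) _ hcomp
    have heq : ∀ kk, ∫ x, u kk (shiftMap G 𝒳 g x) ∂(ν : Measure (G → 𝒳))
        = ∫ x, u kk x ∂(ν : Measure (G → 𝒳)) := fun kk => hD (u kk) (humem kk)
    have := tendsto_nhds_unique (h2.congr heq) h1
    exact this
  refine ⟨?_, ?_⟩
  · refine le_antisymm prob_le_one ?_
    calc (1:ℝ≥0∞) = (θ : Measure (ProbabilityMeasure (G → 𝒳))) A := hAone.symm
    _ ≤ _ := measure_mono hsub
  · intro f hf
    have := key2 (BoundedContinuousFunction.mkOfCompact ⟨f, hf⟩)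
    simpa using this
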